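/- arXiv:1706.04095 — 6 statements merged into one kernel-verified Lean document; each statement's English description precedes it below -/
import Mathlib

section
/- Let C be a category equipped with a flow (T, u, μ) and let a, b, c be objects of C. If (φ, ψ) is a weak ε-interleaving of a and b and (φ', ψ') is a weak ζ-interleaving of b and c, then the morphisms φ'' = (μ_(ε,ζ) at c) ∘ T_ε(φ') ∘ φ : a → T_(ε+ζ)(c) and ψ'' = (μ_(ζ,ε) at a) ∘ T_ζ(ψ) ∘ ψ' : c → T_(ζ+ε)(a) form a weak (ε+ζ)-interleaving of a and c. -/
open CategoryTheory
open scoped NNReal ENNReal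

universe v u

/-- A flow on a category `C`: a lax monoidal action of `([0,∞), ≤, +)` on `C`. -/
structure CatFlow (C : Type u) [Category.{v} C] where
  /-- the `ε`-translation endofunctors -/
  T : ℝ≥0 → C ⥤ C
  /-- the natural transformations `T ε ⟶ T ζ` for `ε ≤ ζ` -/
  Tle : ∀ {ε ζ : ℝ≥0}, ε ≤ ζ → (T ε ⟶ T ζ)
  Tle_refl : ∀ ε : ℝ≥0, Tle (le_refl ε) = 𝟙 (T ε)
  Tle_trans : ∀ {ε ζ δ : ℝ≥0} (h₁ : ε ≤ ζ) (h₂ : ζ ≤ δ), Tle h₁ ≫ Tle h₂ = Tle (h₁.trans h₂)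
  /-- the unit coherence natural transformation `𝟭 C ⟶ T 0` -/
  u : 𝟭 C ⟶ T 0
  /-- the multiplication coherence transformations; note `(T ζ ⋙ T ε).obj a = (T ε).obj ((T ζ).obj a)`,
  which is the composite `T_ε ∘ T_ζ` of the paper. -/
  μ : ∀ ε ζ : ℝ≥0, T ζ ⋙ T ε ⟶ T (ε + ζ)
  unit_left : ∀ (ε : ℝ≥0) (a : C),
    u.app ((T ε).obj a) ≫ (μ 0 ε).app a = eqToHom (by simp)
  unit_right : ∀ (ε : ℝ≥0) (a : C),
    (T ε).map (u.app a) ≫ (μ ε 0).app a = eqToHom (by simp)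
  assoc : ∀ (ε ζ δ : ℝ≥0) (a : C),
    (μ ε ζ).app ((T δ).obj a) ≫ (μ (ε + ζ) δ).app a
      = (T ε).map ((μ ζ δ).app a) ≫ (μ ε (ζ + δ)).app a ≫ eqToHom (by rw [add_assoc])
  compat : ∀ {ε ζ δ κ : ℝ≥0} (h₁ : ε ≤ δ) (h₂ : ζ ≤ κ) (a : C),
    (μ ε ζ).app a ≫ (Tle (add_le_add h₁ h₂)).app a
      = (T ε).map ((Tle h₂).app a) ≫ (Tle h₁).app ((T κ).obj a) ≫ (μ δ κ).app a

/-- `(φ, ψ)` is a weak `ε`-interleaving of `a` and `b`. -/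
structure IsWeakInterleaving {C : Type u} [Category.{v} C] (F : CatFlow C) (ε : ℝ≥0)
    (a b : C) (φ : a ⟶ (F.T ε).obj b) (ψ : b ⟶ (F.T ε).obj a) : Prop where
  left : φ ≫ (F.T ε).map ψ ≫ (F.μ ε ε).app a
      = F.u.app a ≫ (F.Tle (zero_le : (0 : ℝ≥0) ≤ ε + ε)).app a
  right : ψ ≫ (F.T ε).map φ ≫ (F.μ ε ε).app b
      = F.u.app b ≫ (F.Tle (zero_le : (0 : ℝ≥0) ≤ ε + ε)).app b

/-- `a` and `b` are weakly `ε`-interleaved. -/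
def WeaklyInterleaved {C : Type u} [Category.{v} C] (F : CatFlow C) (ε : ℝ≥0) (a b : C) : Prop :=
  ∃ φ ψ, IsWeakInterleaving F ε a b φ ψ

/-- The interleaving distance associated to a flow. -/
noncomputable def interleavingDist {C : Type u} [Category.{v} C] (F : CatFlow C) (a b : C) :
    ℝ≥0∞ :=
  sInf { x : ℝ≥0∞ | ∃ ε : ℝ≥0, x = ε ∧ WeaklyInterleaved F ε a b }


section Aux

variable {C : Type u} [Category.{v} C] (F : CatFlow C)

lemma CatFlow.assoc' (ε ζ δ : ℝ≥0) (a : C) :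
    (F.T ε).map ((F.μ ζ δ).app a) ≫ (F.μ ε (ζ + δ)).app a
      = (F.μ ε ζ).app ((F.T δ).obj a) ≫ (F.μ (ε + ζ) δ).app a ≫
        eqToHom (show (F.T (ε + ζ + δ)).obj a = (F.T (ε + (ζ + δ))).obj a by rw [add_assoc]) := by
  conv_rhs => rw [← Category.assoc, F.assoc ε ζ δ a]
  simp

lemma CatFlow.eqToHom_T_map {ε ζ : ℝ≥0} (h : ε = ζ) {x y : C} (f : x ⟶ y) :
    eqToHom (show (F.T ε).obj x = (F.T ζ).obj x by rw [h]) ≫ (F.T ζ).map f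
      = (F.T ε).map f ≫ eqToHom (show (F.T ε).obj y = (F.T ζ).obj y by rw [h]) := by
  subst h; simp

lemma CatFlow.eqToHom_mu {ε ε' ζ : ℝ≥0} (h : ε = ε') (a : C) :
    eqToHom (show (F.T ε).obj ((F.T ζ).obj a) = (F.T ε').obj ((F.T ζ).obj a) by rw [h]) ≫
        (F.μ ε' ζ).app a
      = (F.μ ε ζ).app a ≫ eqToHom (show (F.T (ε + ζ)).obj a = (F.T (ε' + ζ)).obj a by rw [h]) := by
  subst h; simp

lemma CatFlow.eqToHom_mu₂ {ε ζ ζ' : ℝ≥0} (h : ζ = ζ') (a : C) :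
    eqToHom (show (F.T ε).obj ((F.T ζ).obj a) = (F.T ε).obj ((F.T ζ').obj a) by rw [h]) ≫
        (F.μ ε ζ').app a
      = (F.μ ε ζ).app a ≫ eqToHom (show (F.T (ε + ζ)).obj a = (F.T (ε + ζ')).obj a by rw [h]) := by
  subst h; simp

lemma CatFlow.eqToHom_Tle {ε ε' ζ : ℝ≥0} (h : ε = ε') (hle : ε' ≤ ζ) (hle' : ε ≤ ζ) (a : C) :
    eqToHom (show (F.T ε).obj a = (F.T ε').obj a by rw [h]) ≫ (F.Tle hle).app a
      = (F.Tle hle').app a := by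
  subst h; simp

lemma CatFlow.Tle_eqToHom {ε ζ ζ' : ℝ≥0} (hle : ε ≤ ζ) (h : ζ = ζ') (hle' : ε ≤ ζ') (a : C) :
    (F.Tle hle).app a ≫ eqToHom (show (F.T ζ).obj a = (F.T ζ').obj a by rw [h])
      = (F.Tle hle').app a := by
  subst h; simp

lemma CatFlow.compatA (ε κ : ℝ≥0) (b : C) :
    (F.T ε).map ((F.Tle (zero_le : (0 : ℝ≥0) ≤ κ)).app b) ≫ (F.μ ε κ).app b
      = (F.μ ε 0).app b ≫ (F.Tle (add_le_add le_rfl (zero_le : (0 : ℝ≥0) ≤ κ))).app b := by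
  have h := F.compat (le_refl ε) (zero_le : (0 : ℝ≥0) ≤ κ) b
  rw [F.Tle_refl] at h
  simpa using h.symm

lemma CatFlow.compatB {ε κ : ℝ≥0} (h : ε ≤ κ) (a : C) :
    (F.Tle h).app ((F.T ε).obj a) ≫ (F.μ κ ε).app a
      = (F.μ ε ε).app a ≫ (F.Tle (add_le_add h le_rfl)).app a := by
  have hc := F.compat h (le_refl ε) a
  rw [F.Tle_refl] at hc
  simpa using hc.symm

lemma CatFlow.key {ε ζ : ℝ≥0} {a b c : C}
    (φ : a ⟶ (F.T ε).obj b) (ψ : b ⟶ (F.T ε).obj a)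
    (φ' : b ⟶ (F.T ζ).obj c) (ψ' : c ⟶ (F.T ζ).obj b)
    (h₁ : IsWeakInterleaving F ε a b φ ψ) (h₂ : IsWeakInterleaving F ζ b c φ' ψ') :
    (φ ≫ (F.T ε).map φ' ≫ (F.μ ε ζ).app c) ≫
      (F.T (ε + ζ)).map (ψ' ≫ (F.T ζ).map ψ ≫ (F.μ ζ ε).app a) ≫
      (F.μ (ε + ζ) (ζ + ε)).app a
    = F.u.app a ≫ (F.Tle (zero_le : (0 : ℝ≥0) ≤ (ε + ζ) + (ζ + ε))).app a := by
  simp only [Functor.map_comp, Category.assoc]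
  slice_lhs 3 4 => rw [← (F.μ ε ζ).naturality ψ']
  simp only [Functor.comp_map, Category.assoc]
  slice_lhs 6 7 => rw [F.assoc' (ε + ζ) ζ ε a]
  slice_lhs 5 6 => rw [← Functor.comp_map, (F.μ (ε + ζ) ζ).naturality ψ]
  slice_lhs 4 5 => rw [F.assoc ε ζ ζ b]
  slice_lhs 6 7 => rw [F.eqToHom_T_map (show ε + (ζ + ζ) = ε + ζ + ζ by rw [add_assoc]) ψ]
  slice_lhs 7 8 => rw [F.eqToHom_mu (show ε + (ζ + ζ) = ε + ζ + ζ by rw [add_assoc]) a]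
  slice_lhs 2 4 => rw [← Functor.map_comp, ← Functor.map_comp, h₂.left, Functor.map_comp]
  slice_lhs 3 4 => rw [F.compatA ε (ζ + ζ) b]
  slice_lhs 2 3 => rw [F.unit_right ε b]
  slice_lhs 2 3 =>
    rw [F.eqToHom_Tle (show ε = ε + 0 by simp) (add_le_add le_rfl (zero_le : (0 : ℝ≥0) ≤ ζ + ζ))
      (le_add_right le_rfl) b]
  slice_lhs 2 3 => rw [← (F.Tle (le_add_right le_rfl : ε ≤ ε + (ζ + ζ))).naturality ψ]
  slice_lhs 3 4 => rw [F.compatB (le_add_right le_rfl : ε ≤ ε + (ζ + ζ)) a]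
  slice_lhs 1 3 => rw [h₁.left]
  slice_lhs 2 3 => rw [← NatTrans.comp_app, F.Tle_trans]
  simp only [Category.assoc, eqToHom_trans]
  rw [F.Tle_eqToHom _ (show ε + (ζ + ζ) + ε = ε + ζ + (ζ + ε) by ring) _ a]

end Aux

/-- Composing a weak `ε`-interleaving of `a, b` with a weak `ζ`-interleaving of `b, c`
produces a weak `(ε+ζ)`-interleaving of `a, c` (triangle inequality, constructive form). -/
theorem weakInterleaving_comp {C : Type u} [Category.{v} C] (F : CatFlow C)
    {ε ζ : ℝ≥0} {a b c : C}
    (φ : a ⟶ (F.T ε).obj b) (ψ : b ⟶ (F.T ε).obj a)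
    (φ' : b ⟶ (F.T ζ).obj c) (ψ' : c ⟶ (F.T ζ).obj b)
    (h₁ : IsWeakInterleaving F ε a b φ ψ) (h₂ : IsWeakInterleaving F ζ b c φ' ψ') :
    IsWeakInterleaving F (ε + ζ) a c
      (φ ≫ (F.T ε).map φ' ≫ (F.μ ε ζ).app c)
      (ψ' ≫ (F.T ζ).map ψ ≫ (F.μ ζ ε).app a ≫ eqToHom (by rw [add_comm])) := by
  constructor
  · have k := F.key φ ψ φ' ψ' h₁ h₂
    simp only [Functor.map_comp, Category.assoc] at k ⊢
    simp only [eqToHom_map]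
    slice_lhs 7 8 => rw [F.eqToHom_mu₂ (show ζ + ε = ε + ζ by rw [add_comm]) a]
    slice_lhs 1 7 => rw [k]
    simp only [Category.assoc]
    rw [F.Tle_eqToHom _ (show ε + ζ + (ζ + ε) = ε + ζ + (ε + ζ) by ring) _ a]
  · have k := F.key ψ' φ' ψ φ ⟨h₂.right, h₂.left⟩ ⟨h₁.right, h₁.left⟩
    simp only [Functor.map_comp, Category.assoc] at k ⊢
    slice_lhs 4 5 => rw [F.eqToHom_T_map (show ζ + ε = ε + ζ by rw [add_comm]) φ]
    slice_lhs 5 6 => rw [F.eqToHom_T_map (show ζ + ε = ε + ζ by rw [add_comm]) ((F.T ε).map φ')]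
    slice_lhs 6 7 => rw [F.eqToHom_T_map (show ζ + ε = ε + ζ by rw [add_comm]) ((F.μ ε ζ).app c)]
    slice_lhs 7 8 => rw [F.eqToHom_mu (show ζ + ε = ε + ζ by rw [add_comm]) c]
    slice_lhs 1 7 => rw [k]
    simp only [Category.assoc]
    rw [F.Tle_eqToHom _ (show ζ + ε + (ε + ζ) = ε + ζ + (ε + ζ) by ring) _ c]
end

section
/- Let (M,d) be a metric space and consider the slice category Top↓M equipped with the flow T̂ defined below. Two objects (X,f) and (Y,g) are weakly ε-interleaved with respect to T̂ if and only if there exists a homeomorphism Φ : X → Y such that d(f(x), g(Φ(x))) ≤ ε for every x ∈ X. Consequently the interleaving distance d_((Top↓M),T̂)((X,f),(Y,g)) equals the infimum over all homeomorphisms Φ : X → Y of sup_{x∈X} d(f(x), g(Φ(x))) (and equals ∞ if X and Y are not homeomorphic). -/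
open CategoryTheory
open scoped NNReal ENNReal

universe v u

noncomputable section OverM

open Set

variable (M : Type) [MetricSpace M]

/-- The category of `M`-spaces: the slice category `Top ↓ M`. -/
abbrev MSpaces : Type 1 := Over (TopCat.of M)

variable {M}

/-- The value of the reference map of an `M`-space at a point. -/
def mval (a : MSpaces M) (x : a.left) : M := a.hom x

/-- The underlying set `Q_ε(X,f) = {(x,m) : d(f x, m) ≤ ε}`. -/
abbrev QCarrier (ε : ℝ≥0) (a : MSpaces M) : Type :=
  { p : a.left × M // dist (mval a p.1) p.2 ≤ (ε : ℝ) }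

/-- The `ε`-translation of an `M`-space:
`(X, f) ↦ (Q_ε(X,f), p₂)` where `Q_ε(X,f) = {(x,m) : d(f x, m) ≤ ε}`. -/
def QObj (ε : ℝ≥0) (a : MSpaces M) : MSpaces M :=
  Over.mk (Y := TopCat.of (QCarrier ε a))
    (TopCat.ofHom (ContinuousMap.mk (fun p => p.1.2)
      (continuous_snd.comp continuous_subtype_val)))

/-- The `ε`-translation functor on `M`-spaces. -/
def QT (ε : ℝ≥0) : MSpaces M ⥤ MSpaces M where
  obj a := QObj ε a
  map {a b} φ := Over.homMk
    (TopCat.ofHom (ContinuousMap.mk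
      (fun (p : QCarrier ε a) => (⟨(φ.left p.1.1, p.1.2), by
        show dist (mval b (φ.left p.1.1)) p.1.2 ≤ (ε : ℝ)
        rw [show mval b (φ.left p.1.1) = mval a p.1.1 from
          ConcreteCategory.congr_hom (Over.w φ) p.1.1]
        exact p.2⟩ : QCarrier ε b))
      ((((ContinuousMap.continuous φ.left.hom).comp
          (continuous_fst.comp continuous_subtype_val)).prodMk
        (continuous_snd.comp continuous_subtype_val)).subtype_mk
          (fun (p : QCarrier ε a) => by
            show dist (mval b (φ.left p.1.1)) p.1.2 ≤ (ε : ℝ)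
            rw [show mval b (φ.left p.1.1) = mval a p.1.1 from
              ConcreteCategory.congr_hom (Over.w φ) p.1.1]
            exact p.2))))
    (by ext p; rfl)
  map_id a := by
    ext p
    rfl
  map_comp φ ψ := by
    ext p
    rfl

/-- The cast morphism `(QT ε).obj a ⟶ (QT ζ).obj a` associated to an equality `ε = ζ`. -/
def castHomM {ε ζ : ℝ≥0} (h : ε = ζ) (a : MSpaces M) :
    (QT ε).obj a ⟶ (QT ζ).obj a :=
  Over.homMk
    (TopCat.ofHom (ContinuousMap.mk
      (fun (p : QCarrier ε a) => (⟨p.1, by rw [← h]; exact p.2⟩ : QCarrier ζ a))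
      (continuous_subtype_val.subtype_mk (fun (p : QCarrier ε a) => by
        rw [← h]; exact p.2))))
    (by ext p; rfl)

lemma eqToHom_QT {ε ζ : ℝ≥0} (h : ε = ζ) (a : MSpaces M) :
    eqToHom (show (QT ε).obj a = (QT ζ).obj a by rw [h]) = castHomM h a := by
  subst h
  simp only [eqToHom_refl]
  ext p
  rfl

/-- The flow `T̂` on the slice category `Top ↓ M` of `M`-spaces, with
`T̂_ε(X,f) = (Q_ε(X,f), p₂)`. -/
def overFlowM : CatFlow (MSpaces M) where
  T := QT
  Tle {ε ζ} h :=
    { app := fun a => Over.homMk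
        (TopCat.ofHom (ContinuousMap.mk
          (fun (p : QCarrier ε a) =>
            (⟨p.1, by exact le_trans p.2 (NNReal.coe_le_coe.2 h)⟩ : QCarrier ζ a))
          (continuous_subtype_val.subtype_mk (fun (p : QCarrier ε a) => by
            exact le_trans p.2 (NNReal.coe_le_coe.2 h)))))
        (by ext p; rfl)
      naturality := fun a b φ => by ext p; rfl }
  Tle_refl ε := by
    ext a p
    rfl
  Tle_trans h₁ h₂ := by
    ext a p
    rfl
  u :=
    { app := fun a => Over.homMk
        (TopCat.ofHom (ContinuousMap.mk (fun (x : a.left) => (⟨(x, mval a x), by simp⟩ : QCarrier 0 a))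
          ((continuous_id.prodMk
            (show Continuous (mval a) from ContinuousMap.continuous a.hom.hom)).subtype_mk
              (fun (x : a.left) => by simp))))
        (by ext x; rfl)
      naturality := fun a b φ => by
        ext x
        refine Subtype.ext (Prod.ext_iff.mpr ⟨rfl, ?_⟩)
        exact ConcreteCategory.congr_hom (Over.w φ) x }
  μ ε ζ :=
    { app := fun a => Over.homMk
        (TopCat.ofHom (ContinuousMap.mk
          (fun (q : QCarrier ε (QObj ζ a)) => (⟨((show QCarrier ζ a from q.1.1).1.1, q.1.2), by
            have h1 : dist (mval a (show QCarrier ζ a from q.1.1).1.1) (show QCarrier ζ a from q.1.1).1.2 ≤ (ζ : ℝ) := (show QCarrier ζ a from q.1.1).2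
            have h2 : dist (show QCarrier ζ a from q.1.1).1.2 q.1.2 ≤ (ε : ℝ) := q.2
            calc dist (mval a (show QCarrier ζ a from q.1.1).1.1) q.1.2
                ≤ dist (mval a (show QCarrier ζ a from q.1.1).1.1) (show QCarrier ζ a from q.1.1).1.2 + dist (show QCarrier ζ a from q.1.1).1.2 q.1.2 :=
                  dist_triangle _ _ _
              _ ≤ (ζ : ℝ) + (ε : ℝ) := add_le_add h1 h2
              _ = ((ε + ζ : ℝ≥0) : ℝ) := by push_cast; ring⟩ : QCarrier (ε + ζ) a))
          (((continuous_fst.comp (continuous_subtype_val.comp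
              (continuous_fst.comp (continuous_subtype_val (p := fun p : (QObj ζ a).left × M => dist (mval (QObj ζ a) p.1) p.2 ≤ (ε : ℝ)))))).prodMk
            (continuous_snd.comp continuous_subtype_val)).subtype_mk
              (fun (q : QCarrier ε (QObj ζ a)) => by
                have h1 : dist (mval a (show QCarrier ζ a from q.1.1).1.1) (show QCarrier ζ a from q.1.1).1.2 ≤ (ζ : ℝ) := (show QCarrier ζ a from q.1.1).2
                have h2 : dist (show QCarrier ζ a from q.1.1).1.2 q.1.2 ≤ (ε : ℝ) := q.2
                calc dist (mval a (show QCarrier ζ a from q.1.1).1.1) q.1.2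
                    ≤ dist (mval a (show QCarrier ζ a from q.1.1).1.1) (show QCarrier ζ a from q.1.1).1.2 + dist (show QCarrier ζ a from q.1.1).1.2 q.1.2 :=
                      dist_triangle _ _ _
                  _ ≤ (ζ : ℝ) + (ε : ℝ) := add_le_add h1 h2
                  _ = ((ε + ζ : ℝ≥0) : ℝ) := by push_cast; ring))))
        (by ext q; rfl)
      naturality := fun a b φ => by ext q; rfl }
  unit_left ε a := by
    rw [eqToHom_QT (zero_add ε).symm a]
    ext p
    rfl
  unit_right ε a := by
    rw [eqToHom_QT (add_zero ε).symm a]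
    ext p
    rfl
  assoc ε ζ δ a := by
    rw [eqToHom_QT (add_assoc ε ζ δ).symm a]
    ext p
    rfl
  compat h₁ h₂ a := by
    ext p
    rfl

end OverM

lemma overFlowM_interleaved_of_homeo (M : Type) [MetricSpace M] (a b : MSpaces M) (ε : ℝ≥0)
    (Φ : a.left ≃ₜ b.left) (h : ∀ x, dist (mval a x) (mval b (Φ x)) ≤ (ε : ℝ)) :
    WeaklyInterleaved overFlowM ε a b := by
  have hφ : ∀ x : a.left, dist (mval b (Φ x)) (mval a x) ≤ (ε : ℝ) := by
    intro x; rw [dist_comm]; exact h x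
  have hψ : ∀ y : b.left, dist (mval a (Φ.symm y)) (mval b y) ≤ (ε : ℝ) := by
    intro y
    rw [show mval b y = mval b (Φ (Φ.symm y)) by rw [Φ.apply_symm_apply]]
    exact h _
  refine ⟨Over.homMk (TopCat.ofHom (ContinuousMap.mk
      (fun x => (⟨(Φ x, mval a x), hφ x⟩ : QCarrier ε b))
      ((Φ.continuous.prodMk (ContinuousMap.continuous a.hom.hom)).subtype_mk
        (fun x => hφ x)))) (by ext x; rfl),
    Over.homMk (TopCat.ofHom (ContinuousMap.mk
      (fun y => (⟨(Φ.symm y, mval b y), hψ y⟩ : QCarrier ε a))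
      ((Φ.symm.continuous.prodMk (ContinuousMap.continuous b.hom.hom)).subtype_mk
        (fun y => hψ y)))) (by ext y; rfl),
    ?_, ?_⟩
  · ext x
    refine Subtype.ext (Prod.ext_iff.mpr ⟨?_, rfl⟩)
    exact Φ.symm_apply_apply x
  · ext y
    refine Subtype.ext (Prod.ext_iff.mpr ⟨?_, rfl⟩)
    exact Φ.apply_symm_apply y

lemma overFlowM_homeo_of_interleaved (M : Type) [MetricSpace M] (a b : MSpaces M) (ε : ℝ≥0)
    (h : WeaklyInterleaved overFlowM ε a b) :
    ∃ Φ : a.left ≃ₜ b.left, ∀ x : a.left, dist (mval a x) (mval b (Φ x)) ≤ (ε : ℝ) := by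
  obtain ⟨φ, ψ, hI⟩ := h
  have hw : ∀ x : a.left, ((show QCarrier ε b from φ.left x)).1.2 = mval a x := fun x =>
    ConcreteCategory.congr_hom (Over.w φ) x
  have hl : ∀ x : a.left, ((show QCarrier ε a from ψ.left ((show QCarrier ε b from φ.left x)).1.1)).1.1 = x :=
    fun x => congrArg (fun q : QCarrier (ε+ε) a => q.1.1)
      (ConcreteCategory.congr_hom (congrArg CommaMorphism.left hI.left) x)
  have hr : ∀ y : b.left, ((show QCarrier ε b from φ.left ((show QCarrier ε a from ψ.left y)).1.1)).1.1 = y :=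
    fun y => congrArg (fun q : QCarrier (ε+ε) b => q.1.1)
      (ConcreteCategory.congr_hom (congrArg CommaMorphism.left hI.right) y)
  refine ⟨⟨⟨fun x => (show QCarrier ε b from φ.left x).1.1, fun y => (show QCarrier ε a from ψ.left y).1.1,
      hl, hr⟩,
    (continuous_fst.comp continuous_subtype_val).comp (ContinuousMap.continuous φ.left.hom),
    (continuous_fst.comp continuous_subtype_val).comp (ContinuousMap.continuous ψ.left.hom)⟩,
    ?_⟩
  intro x
  have := (show QCarrier ε b from φ.left x).2
  rw [hw x] at this
  rw [dist_comm]
  exact this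

/-- Two `M`-spaces `(X,f)` and `(Y,g)` are weakly `ε`-interleaved for the flow `T̂` on
`Top ↓ M` iff there is a homeomorphism `Φ : X → Y` with `d (f x) (g (Φ x)) ≤ ε` for all
`x`; consequently the interleaving distance is the extended `L∞`-distance
`inf_Φ sup_x d (f x) (g (Φ x))` (which is `∞` if `X ≄ Y`). -/
theorem overFlowM_interleaving_iff (M : Type) [MetricSpace M] (a b : MSpaces M) :
    (∀ ε : ℝ≥0, WeaklyInterleaved overFlowM ε a b ↔
      ∃ Φ : a.left ≃ₜ b.left, ∀ x : a.left, dist (mval a x) (mval b (Φ x)) ≤ (ε : ℝ)) ∧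
    interleavingDist overFlowM a b =
      ⨅ Φ : a.left ≃ₜ b.left, ⨆ x : a.left,
        ENNReal.ofReal (dist (mval a x) (mval b (Φ x))) := by
  have H : ∀ ε : ℝ≥0, WeaklyInterleaved overFlowM ε a b ↔
      ∃ Φ : a.left ≃ₜ b.left, ∀ x : a.left, dist (mval a x) (mval b (Φ x)) ≤ (ε : ℝ) :=
    fun ε => ⟨overFlowM_homeo_of_interleaved M a b ε, fun ⟨Φ, hΦ⟩ =>
      overFlowM_interleaved_of_homeo M a b ε Φ hΦ⟩
  refine ⟨H, ?_⟩
  unfold interleavingDist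
  refine le_antisymm (le_iInf fun Φ => ?_) (le_sInf ?_)
  · set s := ⨆ x : a.left, ENNReal.ofReal (dist (mval a x) (mval b (Φ x))) with hs
    rcases eq_or_ne s ⊤ with h | h
    · exact h ▸ le_top
    · refine sInf_le ⟨s.toNNReal, (ENNReal.coe_toNNReal h).symm, (H _).mpr ⟨Φ, fun x => ?_⟩⟩
      have h1 : ENNReal.ofReal (dist (mval a x) (mval b (Φ x))) ≤ s :=
        hs ▸ le_iSup (fun x : a.left => ENNReal.ofReal (dist (mval a x) (mval b (Φ x)))) x
      have := ENNReal.toReal_mono h h1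
      rwa [ENNReal.toReal_ofReal dist_nonneg] at this
  · rintro x ⟨ε, rfl, hε⟩
    obtain ⟨Φ, hΦ⟩ := (H ε).mp hε
    refine iInf_le_of_le Φ (iSup_le fun x => ?_)
    calc ENNReal.ofReal (dist (mval a x) (mval b (Φ x)))
        ≤ ENNReal.ofReal ε := ENNReal.ofReal_le_ofReal (hΦ x)
      _ = ε := ENNReal.ofReal_coe_nnreal
end

section
/- Let (H, η) be a colax [0,∞)-equivariant functor from a category with a flow (C, T, u, μ) to a category with a flow (D, S, v, λ). If (φ, ψ) is a weak ε-interleaving of objects a and b in C, then the pair ((η_ε at b) ∘ H(φ), (η_ε at a) ∘ H(ψ)) is a weak ε-interleaving of H(a) and H(b) in D. Consequently H is 1-Lipschitz with respect to the interleaving distances: d_(D,S)(H(a), H(b)) ≤ d_(C,T)(a, b) for every pair of objects a, b of C. -/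
open CategoryTheory
open scoped NNReal ENNReal

universe v u

universe v₂ u₂ v₃ u₃

/-- A colax `[0,∞)`-equivariant structure on a functor `H : C ⥤ D` between categories
equipped with flows: natural transformations `η_ε : H ∘ T_ε ⟹ S_ε ∘ H` compatible with
the units, the order morphisms, and the multiplications of the two flows. -/
structure ColaxStructure {C : Type u} [Category.{v} C] {D : Type u₂} [Category.{v₂} D]
    (FC : CatFlow C) (FD : CatFlow D) (H : C ⥤ D) where
  η : ∀ ε : ℝ≥0, FC.T ε ⋙ H ⟶ H ⋙ FD.T ε
  η_unit : ∀ a : C, H.map (FC.u.app a) ≫ (η 0).app a = FD.u.app (H.obj a)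
  η_mono : ∀ {ε ζ : ℝ≥0} (h : ε ≤ ζ) (a : C),
    H.map ((FC.Tle h).app a) ≫ (η ζ).app a = (η ε).app a ≫ (FD.Tle h).app (H.obj a)
  η_mul : ∀ (ε ζ : ℝ≥0) (a : C),
    (η ε).app ((FC.T ζ).obj a) ≫ (FD.T ε).map ((η ζ).app a) ≫ (FD.μ ε ζ).app (H.obj a)
      = H.map ((FC.μ ε ζ).app a) ≫ (η (ε + ζ)).app a

/-- A colax `[0,∞)`-equivariant functor sends weak `ε`-interleavings to weak
`ε`-interleavings and is therefore 1-Lipschitz with respect to the interleaving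
distances (soft stability). -/
theorem colax_equivariant_stability {C : Type u} [Category.{v} C]
    {D : Type u₂} [Category.{v₂} D] (FC : CatFlow C) (FD : CatFlow D)
    (H : C ⥤ D) (E : ColaxStructure FC FD H) :
    (∀ (ε : ℝ≥0) (a b : C) (φ : a ⟶ (FC.T ε).obj b) (ψ : b ⟶ (FC.T ε).obj a),
      IsWeakInterleaving FC ε a b φ ψ →
      IsWeakInterleaving FD ε (H.obj a) (H.obj b)
        (H.map φ ≫ (E.η ε).app b) (H.map ψ ≫ (E.η ε).app a)) ∧
    ∀ a b : C, interleavingDist FD (H.obj a) (H.obj b) ≤ interleavingDist FC a b := by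
  have key : ∀ (ε : ℝ≥0) (a b : C) (φ : a ⟶ (FC.T ε).obj b) (ψ : b ⟶ (FC.T ε).obj a),
      (φ ≫ (FC.T ε).map ψ ≫ (FC.μ ε ε).app a
        = FC.u.app a ≫ (FC.Tle (zero_le : (0 : ℝ≥0) ≤ ε + ε)).app a) →
      (H.map φ ≫ (E.η ε).app b) ≫ (FD.T ε).map (H.map ψ ≫ (E.η ε).app a)
          ≫ (FD.μ ε ε).app (H.obj a)
        = FD.u.app (H.obj a) ≫ (FD.Tle (zero_le : (0 : ℝ≥0) ≤ ε + ε)).app (H.obj a) := by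
    intro ε a b φ ψ h
    have nat : (E.η ε).app b ≫ (FD.T ε).map (H.map ψ)
        = H.map ((FC.T ε).map ψ) ≫ (E.η ε).app ((FC.T ε).obj a) :=
      ((E.η ε).naturality ψ).symm
    calc (H.map φ ≫ (E.η ε).app b) ≫ (FD.T ε).map (H.map ψ ≫ (E.η ε).app a)
          ≫ (FD.μ ε ε).app (H.obj a)
        = H.map φ ≫ ((E.η ε).app b ≫ (FD.T ε).map (H.map ψ))
            ≫ (FD.T ε).map ((E.η ε).app a) ≫ (FD.μ ε ε).app (H.obj a) := by
          simp [Functor.map_comp]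
      _ = H.map φ ≫ H.map ((FC.T ε).map ψ) ≫ ((E.η ε).app ((FC.T ε).obj a)
            ≫ (FD.T ε).map ((E.η ε).app a) ≫ (FD.μ ε ε).app (H.obj a)) := by
          rw [nat]; simp
      _ = H.map φ ≫ H.map ((FC.T ε).map ψ) ≫ H.map ((FC.μ ε ε).app a)
            ≫ (E.η (ε + ε)).app a := by rw [E.η_mul]
      _ = H.map (φ ≫ (FC.T ε).map ψ ≫ (FC.μ ε ε).app a) ≫ (E.η (ε + ε)).app a := by
          simp [Functor.map_comp]
      _ = H.map (FC.u.app a) ≫ H.map ((FC.Tle (zero_le : (0 : ℝ≥0) ≤ ε + ε)).app a)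
            ≫ (E.η (ε + ε)).app a := by rw [h]; simp [Functor.map_comp]
      _ = H.map (FC.u.app a) ≫ (E.η 0).app a
            ≫ (FD.Tle (zero_le : (0 : ℝ≥0) ≤ ε + ε)).app (H.obj a) := by
          rw [← Category.assoc, ← Category.assoc, ← Functor.map_comp,
            Functor.map_comp, Category.assoc, E.η_mono (zero_le : (0 : ℝ≥0) ≤ ε + ε) a, Category.assoc]
      _ = FD.u.app (H.obj a) ≫ (FD.Tle (zero_le : (0 : ℝ≥0) ≤ ε + ε)).app (H.obj a) := by
          rw [← Category.assoc, E.η_unit]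
  have main : ∀ (ε : ℝ≥0) (a b : C) (φ : a ⟶ (FC.T ε).obj b) (ψ : b ⟶ (FC.T ε).obj a),
      IsWeakInterleaving FC ε a b φ ψ →
      IsWeakInterleaving FD ε (H.obj a) (H.obj b)
        (H.map φ ≫ (E.η ε).app b) (H.map ψ ≫ (E.η ε).app a) := by
    intro ε a b φ ψ hI
    exact ⟨key ε a b φ ψ hI.left, key ε b a ψ φ hI.right⟩
  refine ⟨main, fun a b => ?_⟩
  apply sInf_le_sInf
  rintro x ⟨ε, rfl, φ, ψ, hI⟩
  exact ⟨ε, rfl, H.map φ ≫ (E.η ε).app b, H.map ψ ≫ (E.η ε).app a, main ε a b φ ψ hI⟩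
end

section
/- Let P be a preorder with a superlinear family of translations Ω, let D and E be categories, and let H : D ⥤ E be a functor. Post-composition with H sends every weak ε-interleaving of functors F, G : P ⥤ D (with respect to the induced flow −·Ω on D^P) to a weak ε-interleaving of H∘F and H∘G (with respect to the induced flow −·Ω on E^P). In particular, d_(E^P, −·Ω)(H∘F, H∘G) ≤ d_(D^P, −·Ω)(F, G). -/
open CategoryTheory
open scoped NNReal ENNReal

universe v u

/-- A superlinear family of translations on a preorder `P`. -/
structure SuperlinearFamily (P : Type u) [Preorder P] where
  /-- the underlying translation maps -/
  Ω : ℝ≥0 → P → P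
  mono : ∀ ε : ℝ≥0, Monotone (Ω ε)
  le_self : ∀ (ε : ℝ≥0) (p : P), p ≤ Ω ε p
  mono_eps : ∀ {ε ζ : ℝ≥0}, ε ≤ ζ → ∀ p : P, Ω ε p ≤ Ω ζ p
  superlinear : ∀ (ε ζ : ℝ≥0) (p : P), Ω ε (Ω ζ p) ≤ Ω (ε + ζ) p
universe v₂ u₂ v₃ u₃

section InducedFlow

variable {P : Type u} [Preorder P] {D : Type u₂} [Category.{v₂} D]

private lemma map_homOfLE_comp_eq_eqToHom (F : P ⥤ D) {p q r : P} (h₁ : p ≤ q) (h₂ : q ≤ r)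
    (hpr : p = r) :
    F.map (homOfLE h₁) ≫ F.map (homOfLE h₂) = eqToHom (congrArg F.obj hpr) := by
  subst hpr
  rw [← F.map_comp, show homOfLE h₁ ≫ homOfLE h₂ = 𝟙 p from Subsingleton.elim _ _,
    F.map_id, eqToHom_refl]

/-- The flow induced on a functor category `P ⥤ D` ("generalized persistence modules")
by a superlinear family of translations on the preorder `P`, given by precomposition. -/
def SuperlinearFamily.inducedFlow (S : SuperlinearFamily P) (D : Type u₂) [Category.{v₂} D] :
    CatFlow (P ⥤ D) where
  T ε := (Functor.whiskeringLeft P P D).obj (S.mono ε).functor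
  Tle {ε ζ} h :=
    { app := fun F =>
        { app := fun p => F.map (homOfLE (S.mono_eps h p))
          naturality := fun p q hpq => by
            dsimp
            erw [← F.map_comp, ← F.map_comp]
            exact congrArg F.map (Subsingleton.elim _ _) }
      naturality := fun F G α => by
        ext p
        exact (α.naturality _).symm }
  Tle_refl ε := by
    ext F p
    dsimp
    simp
  Tle_trans h₁ h₂ := by
    ext F p
    dsimp
    rw [← F.map_comp]
    exact congrArg F.map (Subsingleton.elim _ _)
  u :=
    { app := fun F =>
        { app := fun p => F.map (homOfLE (S.le_self 0 p))
          naturality := fun p q hpq => by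
            dsimp
            erw [← F.map_comp, ← F.map_comp]
            exact congrArg F.map (Subsingleton.elim _ _) }
      naturality := fun F G α => by
        ext p
        exact (α.naturality _).symm }
  μ ε ζ :=
    { app := fun F =>
        { app := fun p => F.map (homOfLE ((S.superlinear ζ ε p).trans
            (S.mono_eps (le_of_eq (add_comm ζ ε)) p)))
          naturality := fun p q hpq => by
            dsimp
            erw [← F.map_comp, ← F.map_comp]
            exact congrArg F.map (Subsingleton.elim _ _) }
      naturality := fun F G α => by
        ext p
        exact (α.naturality _).symm }
  unit_left ε F := by
    ext p
    simp only [NatTrans.comp_app, eqToHom_app]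
    dsimp
    exact map_homOfLE_comp_eq_eqToHom F _ _ (by rw [zero_add])
  unit_right ε F := by
    ext p
    simp only [NatTrans.comp_app, eqToHom_app]
    dsimp
    exact map_homOfLE_comp_eq_eqToHom F _ _ (by rw [add_zero])
  assoc ε ζ δ F := by
    ext p
    simp only [NatTrans.comp_app, eqToHom_app]
    dsimp
    rw [show (eqToHom (by rw [add_assoc]) :
        F.obj (S.Ω (ε + (ζ + δ)) p) ⟶ F.obj (S.Ω (ε + ζ + δ) p)) =
        F.map (eqToHom (by rw [add_assoc])) from (eqToHom_map F _).symm]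
    erw [← F.map_comp, ← F.map_comp, ← F.map_comp]
    exact congrArg F.map (Subsingleton.elim _ _)
  compat h₁ h₂ F := by
    ext p
    simp only [NatTrans.comp_app]
    dsimp
    erw [← F.map_comp, ← F.map_comp, ← F.map_comp]
    exact congrArg F.map (Subsingleton.elim _ _)

end InducedFlow

/-- Post-composition with a functor `H : D ⥤ E` sends weak `ε`-interleavings of
generalized persistence modules (for the flows induced by `Ω`) to weak `ε`-interleavings,
and is therefore 1-Lipschitz for the interleaving distances. -/
theorem postcomposition_weak_interleaving_stability {P : Type u} [Preorder P]
    {D : Type u₂} [Category.{v₂} D] {E : Type u₃} [Category.{v₃} E]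
    (S : SuperlinearFamily P) (H : D ⥤ E) (F G : P ⥤ D) :
    (∀ (ε : ℝ≥0) (φ : F ⟶ ((S.inducedFlow D).T ε).obj G)
        (ψ : G ⟶ ((S.inducedFlow D).T ε).obj F),
      IsWeakInterleaving (S.inducedFlow D) ε F G φ ψ →
      IsWeakInterleaving (S.inducedFlow E) ε (F ⋙ H) (G ⋙ H)
        (Functor.whiskerRight φ H) (Functor.whiskerRight ψ H)) ∧
    interleavingDist (S.inducedFlow E) (F ⋙ H) (G ⋙ H) ≤
      interleavingDist (S.inducedFlow D) F G := by
  have key : ∀ (ε : ℝ≥0) (φ : F ⟶ ((S.inducedFlow D).T ε).obj G)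
      (ψ : G ⟶ ((S.inducedFlow D).T ε).obj F),
      IsWeakInterleaving (S.inducedFlow D) ε F G φ ψ →
      IsWeakInterleaving (S.inducedFlow E) ε (F ⋙ H) (G ⋙ H)
        (Functor.whiskerRight φ H) (Functor.whiskerRight ψ H) := by
    intro ε φ ψ h
    constructor
    · ext p
      have := congrArg (fun α : F ⟶ _ => H.map (α.app p)) h.left
      simp only [NatTrans.comp_app, H.map_comp] at this
      exact this
    · ext p
      have := congrArg (fun α : G ⟶ _ => H.map (α.app p)) h.right
      simp only [NatTrans.comp_app, H.map_comp] at this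
      exact this
  refine ⟨key, sInf_le_sInf ?_⟩
  rintro x ⟨ε, rfl, φ, ψ, h⟩
  exact ⟨ε, rfl, Functor.whiskerRight φ H, Functor.whiskerRight ψ H, key ε φ ψ h⟩
end

section
/- Let P be a preorder with a superlinear family of translations Ω, let D and E be categories, and let H : D ⥤ E be a functor. If F, G : P ⥤ D are Ω_ε-interleaved via natural transformations (φ, ψ), then H∘F and H∘G are Ω_ε-interleaved via the whiskered natural transformations (H applied to φ, H applied to ψ). Consequently d_Ω(H∘F, H∘G) ≤ d_Ω(F, G). -/
open CategoryTheory
open scoped NNReal ENNReal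

universe v u v₂ u₂ v₃ u₃

/-- An `Ω_ε`-interleaving of generalized persistence modules `F, G : P ⥤ D`
(Bubenik–de Silva–Scott style). -/
structure OmegaInterleaving {P : Type u} [Preorder P] {D : Type u₂} [Category.{v₂} D]
    (S : SuperlinearFamily P) (ε : ℝ≥0) (F G : P ⥤ D) where
  φ : F ⟶ (S.mono ε).functor ⋙ G
  ψ : G ⟶ (S.mono ε).functor ⋙ F
  left : ∀ p : P, φ.app p ≫ ψ.app (S.Ω ε p)
      = F.map (homOfLE ((S.le_self ε p).trans (S.le_self ε (S.Ω ε p))))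
  right : ∀ p : P, ψ.app p ≫ φ.app (S.Ω ε p)
      = G.map (homOfLE ((S.le_self ε p).trans (S.le_self ε (S.Ω ε p))))

/-- `F` and `G` are `Ω_ε`-interleaved. -/
def OmegaInterleaved {P : Type u} [Preorder P] {D : Type u₂} [Category.{v₂} D]
    (S : SuperlinearFamily P) (ε : ℝ≥0) (F G : P ⥤ D) : Prop :=
  Nonempty (OmegaInterleaving S ε F G)

/-- The interleaving distance `d_Ω` of generalized persistence modules. -/
noncomputable def dOmega {P : Type u} [Preorder P] {D : Type u₂} [Category.{v₂} D]
    (S : SuperlinearFamily P) (F G : P ⥤ D) : ℝ≥0∞ :=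
  sInf { x : ℝ≥0∞ | ∃ ε : ℝ≥0, x = ε ∧ OmegaInterleaved S ε F G }

/-- Post-composition with `H : D ⥤ E` sends an `Ω_ε`-interleaving `(φ, ψ)` of `F` and `G`
to the `Ω_ε`-interleaving `(φ ◫ H, ψ ◫ H)` of `F ⋙ H` and `G ⋙ H` given by whiskering;
consequently `d_Ω(H∘F, H∘G) ≤ d_Ω(F, G)`. -/
theorem postcomposition_omega_interleaving_stability {P : Type u} [Preorder P]
    {D : Type u₂} [Category.{v₂} D] {E : Type u₃} [Category.{v₃} E]
    (S : SuperlinearFamily P) (H : D ⥤ E) (F G : P ⥤ D) :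
    (∀ (ε : ℝ≥0) (I : OmegaInterleaving S ε F G),
      ∃ J : OmegaInterleaving S ε (F ⋙ H) (G ⋙ H),
        J.φ = Functor.whiskerRight I.φ H ∧ J.ψ = Functor.whiskerRight I.ψ H) ∧
    dOmega S (F ⋙ H) (G ⋙ H) ≤ dOmega S F G := by
  have key : ∀ (ε : ℝ≥0) (I : OmegaInterleaving S ε F G),
      ∃ J : OmegaInterleaving S ε (F ⋙ H) (G ⋙ H),
        J.φ = Functor.whiskerRight I.φ H ∧ J.ψ = Functor.whiskerRight I.ψ H := by
    intro ε I
    refine ⟨⟨Functor.whiskerRight I.φ H, Functor.whiskerRight I.ψ H, ?_, ?_⟩, rfl, rfl⟩ <;> intro p <;>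
      simp only [Functor.whiskerRight_app, Functor.comp_map, ← H.map_comp, I.left p, I.right p]
    · exact (H.map_comp _ _).symm.trans (congrArg H.map (I.left p))
    · exact (H.map_comp _ _).symm.trans (congrArg H.map (I.right p))
  refine ⟨key, ?_⟩
  refine sInf_le_sInf ?_
  rintro x ⟨ε, rfl, ⟨I⟩⟩
  exact ⟨ε, rfl, ⟨(key ε I).choose⟩⟩
end

section
/- Let (M,d) be a metric space, X and Y topological spaces, f : X → M and g : Y → M continuous, ε ≥ 0, and suppose Φ : X → Y is a homeomorphism with d(f(x), g(Φ(x))) ≤ ε for all x ∈ X. Let L_f and L_g be the level set filtration functors from the poset of subsets of M (ordered by inclusion) to Top, U ↦ f⁻¹(U) and U ↦ g⁻¹(U), and let H : Top ⥤ D be any functor into any category D (for example a homology functor into vector spaces). Then H∘L_f and H∘L_g are Ω_ε-interleaved for the superlinear family Ω_ε(U) = closed ε-thickening of U. Consequently d_Ω(H∘L_f, H∘L_g) ≤ sup_{x∈X} d(f(x), g(Φ(x))) whenever such a homeomorphism exists (soft stability of level set persistence). -/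
open CategoryTheory
open scoped NNReal ENNReal

universe v u

universe v₂ u₂

/-- The closed-thickening superlinear family `U ↦ {m : infEdist m U ≤ ε}` on the poset of
subsets of a metric space `M` ordered by inclusion. -/
noncomputable def thickeningFamily (M : Type) [MetricSpace M] :
    SuperlinearFamily (Set M) where
  Ω ε U := Metric.cthickening (ε : ℝ) U
  mono ε U V h := Metric.cthickening_subset_of_subset _ h
  le_self ε U := Metric.self_subset_cthickening U
  mono_eps h U := Metric.cthickening_mono (NNReal.coe_le_coe.2 h) U
  superlinear ε ζ U := by
    try dsimp only
    rw [NNReal.coe_add]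
    exact Metric.cthickening_cthickening_subset ε.2 ζ.2 U

/-- The level set filtration of `f : X → M`, a functor from the poset of subsets of `M`
(ordered by inclusion) to `Top`, `U ↦ f ⁻¹' U`. -/
def levelFiltration {X : Type} [TopologicalSpace X] {M : Type} [MetricSpace M]
    (f : X → M) : Set M ⥤ TopCat where
  obj U := TopCat.of (f ⁻¹' U)
  map {U V} h :=
    TopCat.ofHom ⟨Set.inclusion (Set.preimage_mono (leOfHom h)), continuous_inclusion _⟩

lemma level_interleaved_of_homeo {M : Type} [MetricSpace M] {X Y : Type}
    [TopologicalSpace X] [TopologicalSpace Y] (f : X → M) (g : Y → M)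
    {D : Type u₂} [Category.{v₂} D] (H : TopCat ⥤ D)
    (ε : ℝ≥0) (Φ : X ≃ₜ Y) (hΦ : ∀ x : X, dist (f x) (g (Φ x)) ≤ ε) :
    OmegaInterleaved (thickeningFamily M) ε (levelFiltration f ⋙ H) (levelFiltration g ⋙ H) := by
  have hΦ' : ∀ y : Y, dist (g y) (f (Φ.symm y)) ≤ ε := by
    intro y
    rw [dist_comm]
    simpa using hΦ (Φ.symm y)
  let φ₀ : levelFiltration f ⟶ ((thickeningFamily M).mono ε).functor ⋙ levelFiltration g :=
    { app := fun U =>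
        TopCat.ofHom ⟨fun x => ⟨Φ x.1, Metric.mem_cthickening_of_dist_le (g (Φ x.1)) (f x.1) _ U x.2
            (by rw [dist_comm]; exact hΦ x.1)⟩,
          (Φ.continuous.comp continuous_subtype_val).subtype_mk _⟩
      naturality := fun U V h => by
        ext x
        rfl }
  let ψ₀ : levelFiltration g ⟶ ((thickeningFamily M).mono ε).functor ⋙ levelFiltration f :=
    { app := fun U =>
        TopCat.ofHom ⟨fun y => ⟨Φ.symm y.1, Metric.mem_cthickening_of_dist_le (f (Φ.symm y.1)) (g y.1) _ U y.2
            (by rw [dist_comm]; exact hΦ' y.1)⟩,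
          (Φ.symm.continuous.comp continuous_subtype_val).subtype_mk _⟩
      naturality := fun U V h => by
        ext y
        rfl }
  refine ⟨⟨Functor.whiskerRight φ₀ H, Functor.whiskerRight ψ₀ H, ?_, ?_⟩⟩
  · intro U
    show H.map (φ₀.app U) ≫ H.map (ψ₀.app _) = H.map ((levelFiltration f).map _)
    rw [← H.map_comp]
    congr 1
    ext x
    exact Subtype.ext (Φ.symm_apply_apply x.1)
  · intro U
    show H.map (ψ₀.app U) ≫ H.map (φ₀.app _) = H.map ((levelFiltration g).map _)
    rw [← H.map_comp]
    congr 1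
    ext y
    exact Subtype.ext (Φ.apply_symm_apply y.1)

/-- Soft stability of level set persistence: if `Φ : X ≃ₜ Y` satisfies
`d (f x) (g (Φ x)) ≤ ε` everywhere, then for any functor `H : Top ⥤ D` (e.g. homology),
the composites `H ∘ L_f` and `H ∘ L_g` are `Ω_ε`-interleaved for the closed-thickening
family, and `d_Ω(H∘L_f, H∘L_g) ≤ sup_x d (f x) (g (Φ x))`. -/
theorem level_persistence_soft_stability {M : Type} [MetricSpace M] {X Y : Type}
    [TopologicalSpace X] [TopologicalSpace Y] (f : X → M) (g : Y → M)
    (hf : Continuous f) (hg : Continuous g)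
    {D : Type u₂} [Category.{v₂} D] (H : TopCat ⥤ D)
    (ε : ℝ≥0) (Φ : X ≃ₜ Y) (hΦ : ∀ x : X, dist (f x) (g (Φ x)) ≤ ε) :
    OmegaInterleaved (thickeningFamily M) ε (levelFiltration f ⋙ H) (levelFiltration g ⋙ H) ∧
    dOmega (thickeningFamily M) (levelFiltration f ⋙ H) (levelFiltration g ⋙ H) ≤
      ⨆ x : X, ENNReal.ofReal (dist (f x) (g (Φ x))) := by
  refine ⟨level_interleaved_of_homeo f g H ε Φ hΦ, ?_⟩
  set S := ⨆ x : X, ENNReal.ofReal (dist (f x) (g (Φ x))) with hS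
  have hSle : S ≤ (ε : ℝ≥0∞) := iSup_le fun x =>
    (ENNReal.ofReal_le_ofReal (hΦ x)).trans ENNReal.ofReal_coe_nnreal.le
  have hStop : S ≠ ⊤ := fun h => by simp [h] at hSle
  set ε₀ := S.toNNReal with hε₀def
  have hε₀ : (ε₀ : ℝ≥0∞) = S := ENNReal.coe_toNNReal hStop
  have hΦ' : ∀ x : X, dist (f x) (g (Φ x)) ≤ ε₀ := by
    intro x
    have h1 : ENNReal.ofReal (dist (f x) (g (Φ x))) ≤ ENNReal.ofReal (ε₀ : ℝ) := by
      rw [ENNReal.ofReal_coe_nnreal, hε₀]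
      exact le_iSup (fun x => ENNReal.ofReal (dist (f x) (g (Φ x)))) x
    exact (ENNReal.ofReal_le_ofReal_iff ε₀.coe_nonneg).mp h1
  exact sInf_le ⟨ε₀, hε₀.symm, level_interleaved_of_homeo f g H ε₀ Φ hΦ'⟩
end
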